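/- Let f: G → H be a surjective homomorphism of finitely generated groups and let S be a generating n-tuple of G. If the connected component of f(S) in Γ_n(H) has exponential growth, then the connected component of S in Γ_n(G) has exponential growth. -/

import Mathlib

open Filter Subgroup Set

/-- `T` is obtained from `S` by a single Nielsen move. -/
def nielsenMove {G : Type*} [Group G] {n : ℕ} (S T : Fin n → G) : Prop :=
  ∃ i j : Fin n, i ≠ j ∧
    (T = Function.update S j (S j * S i) ∨ T = Function.update S j (S j * (S i)⁻¹) ∨
     T = Function.update S j (S i * S j) ∨ T = Function.update S j ((S i)⁻¹ * S j))

/-- The product replacement graph of `G` on `n`-tuples: edges are Nielsen moves.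
(Nielsen moves preserve generation, so the connected component of a generating
`n`-tuple consists exactly of generating `n`-tuples.) -/
def PRG (G : Type*) [Group G] (n : ℕ) : SimpleGraph (Fin n → G) where
  Adj S T := S ≠ T ∧ (nielsenMove S T ∨ nielsenMove T S)
  symm := ⟨fun S T h => ⟨h.1.symm, h.2.symm⟩⟩
  loopless := ⟨fun S h => h.1 rfl⟩

/-- The ball of radius `r` around vertex `v` in a graph. -/
def gball {V : Type*} (Γ : SimpleGraph V) (v : V) (r : ℕ) : Set V :=
  {w | ∃ p : Γ.Walk v w, p.length ≤ r}

/-- `Γ` has exponential growth from `v`. -/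
def expGrowthFrom {V : Type*} (Γ : SimpleGraph V) (v : V) : Prop :=
  ∃ α : ℝ, 1 < α ∧ ∀ᶠ r : ℕ in atTop, α ^ r ≤ ((gball Γ v r).ncard : ℝ)

/-- The ball of radius `r` in the Cayley graph of `G` with respect to the tuple `S`. -/
def cayleyBall {G : Type*} [Group G] {n : ℕ} (S : Fin n → G) (r : ℕ) : Set G :=
  {g | ∃ l : List G, l.length ≤ r ∧ (∀ x ∈ l, x ∈ Set.range S ∨ x⁻¹ ∈ Set.range S) ∧
    l.prod = g}

lemma nielsenMove_symm {G : Type*} [Group G] {n : ℕ} {S T : Fin n → G}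
    (h : nielsenMove S T) : nielsenMove T S := by
  obtain ⟨i, j, hij, hc⟩ := h
  refine ⟨i, j, hij, ?_⟩
  rcases hc with h|h|h|h <;> subst h
  · right; left
    funext k
    by_cases hk : k = j
    · subst hk; simp [Function.update_of_ne hij]
    · simp [Function.update_of_ne hk]
  · left
    funext k
    by_cases hk : k = j
    · subst hk; simp [Function.update_of_ne hij]
    · simp [Function.update_of_ne hk]
  · right; right; right
    funext k
    by_cases hk : k = j
    · subst hk; simp [Function.update_of_ne hij]
    · simp [Function.update_of_ne hk]
  · right; right; left
    funext k
    by_cases hk : k = j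
    · subst hk; simp [Function.update_of_ne hij]
    · simp [Function.update_of_ne hk]

lemma nielsen_finite {G : Type*} [Group G] {n : ℕ} (S : Fin n → G) :
    {T | nielsenMove S T}.Finite := by
  have hsub : {T | nielsenMove S T} ⊆ ⋃ i : Fin n, ⋃ j : Fin n,
      ({Function.update S j (S j * S i), Function.update S j (S j * (S i)⁻¹),
        Function.update S j (S i * S j), Function.update S j ((S i)⁻¹ * S j)} :
        Set (Fin n → G)) := by
    rintro T ⟨i, j, hij, hc⟩
    refine Set.mem_iUnion.2 ⟨i, Set.mem_iUnion.2 ⟨j, ?_⟩⟩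
    rcases hc with h|h|h|h <;> simp [h]
  exact (Set.finite_iUnion fun i => Set.finite_iUnion fun j => Set.toFinite _).subset hsub

lemma prg_nbhd_finite {G : Type*} [Group G] {n : ℕ} (S : Fin n → G) :
    {T | (PRG G n).Adj S T}.Finite := by
  refine (nielsen_finite S).subset ?_
  rintro T ⟨-, h | h⟩
  · exact h
  · exact nielsenMove_symm h

lemma gball_finite {V : Type*} (Γ : SimpleGraph V)
    (hd : ∀ v, {w | Γ.Adj v w}.Finite) : ∀ (r : ℕ) (v : V), (gball Γ v r).Finite := by
  intro r
  induction r with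
  | zero =>
    intro v
    refine (Set.finite_singleton v).subset ?_
    rintro w ⟨p, hp⟩
    have := p.eq_of_length_eq_zero (Nat.le_zero.mp hp)
    exact this ▸ rfl
  | succ r ih =>
    intro v
    refine Set.Finite.subset ((Set.finite_singleton v).union ((hd v).biUnion fun x _ => ih x)) ?_
    rintro w ⟨p, hp⟩
    cases p with
    | nil => exact Or.inl rfl
    | cons h q =>
      right
      exact Set.mem_biUnion h ⟨q, by simpa [SimpleGraph.Walk.length_cons] using hp⟩

lemma adj_lift {G H : Type*} [Group G] [Group H] (f : G →* H) {n : ℕ} (S : Fin n → G)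
    {w : Fin n → H} (h : (PRG H n).Adj (f ∘ S) w) :
    ∃ T : Fin n → G, f ∘ T = w ∧ (PRG G n).Adj S T := by
  obtain ⟨hne, hm⟩ := h
  have hm' : nielsenMove (f ∘ S) w := hm.elim id nielsenMove_symm
  obtain ⟨i, j, hij, hc⟩ := hm'
  have key : ∀ g : G, f ∘ Function.update S j g = Function.update (f ∘ S) j (f g) := by
    intro g
    funext k
    by_cases hk : k = j
    · subst hk; simp
    · simp [Function.update_of_ne hk]
  rcases hc with h|h|h|h
  · refine ⟨Function.update S j (S j * S i), ?_, ?_⟩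
    · rw [h, key]; simp
    · refine ⟨fun e => hne ?_, Or.inl ⟨i, j, hij, Or.inl rfl⟩⟩
      rw [h]; conv_lhs => rw [e]
      rw [key]; simp
  · refine ⟨Function.update S j (S j * (S i)⁻¹), ?_, ?_⟩
    · rw [h, key]; simp
    · refine ⟨fun e => hne ?_, Or.inl ⟨i, j, hij, Or.inr (Or.inl rfl)⟩⟩
      rw [h]; conv_lhs => rw [e]
      rw [key]; simp
  · refine ⟨Function.update S j (S i * S j), ?_, ?_⟩
    · rw [h, key]; simp
    · refine ⟨fun e => hne ?_, Or.inl ⟨i, j, hij, Or.inr (Or.inr (Or.inl rfl))⟩⟩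
      rw [h]; conv_lhs => rw [e]
      rw [key]; simp
  · refine ⟨Function.update S j ((S i)⁻¹ * S j), ?_, ?_⟩
    · rw [h, key]; simp
    · refine ⟨fun e => hne ?_, Or.inl ⟨i, j, hij, Or.inr (Or.inr (Or.inr rfl))⟩⟩
      rw [h]; conv_lhs => rw [e]
      rw [key]; simp

lemma walk_lift {G H : Type*} [Group G] [Group H] (f : G →* H) {n : ℕ} :
    ∀ {u w : Fin n → H} (p : (PRG H n).Walk u w) (S' : Fin n → G), f ∘ S' = u →
    ∃ T : Fin n → G, f ∘ T = w ∧ ∃ q : (PRG G n).Walk S' T, q.length = p.length := by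
  intro u w p
  induction p with
  | nil => exact fun S' hS' => ⟨S', hS', SimpleGraph.Walk.nil, rfl⟩
  | cons h p ih =>
    intro S' hS'
    obtain ⟨T₁, hT₁, hadj⟩ := adj_lift f S' (by rw [hS']; exact h)
    obtain ⟨T, hT, q, hq⟩ := ih T₁ hT₁
    exact ⟨T, hT, q.cons hadj, by simp [hq]⟩

theorem stmt8 {G H : Type*} [Group G] [Group H] (hGfg : Group.FG G) (hHfg : Group.FG H)
    (f : G →* H) (hf : Function.Surjective f)
    {n : ℕ} (S : Fin n → G) (hS : closure (Set.range S) = ⊤)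
    (h : expGrowthFrom (PRG H n) (f ∘ S)) :
    expGrowthFrom (PRG G n) S := by
  obtain ⟨α, hα, hev⟩ := h
  refine ⟨α, hα, ?_⟩
  filter_upwards [hev] with r hr
  refine hr.trans ?_
  have hfin : (gball (PRG G n) S r).Finite :=
    gball_finite _ (fun v => prg_nbhd_finite v) r S
  have hsub : gball (PRG H n) (f ∘ S) r ⊆ (fun T => f ∘ T) '' gball (PRG G n) S r := by
    rintro w ⟨p, hp⟩
    obtain ⟨T, hT, q, hq⟩ := walk_lift f p S rfl
    exact ⟨T, ⟨q, hq ▸ hp⟩, hT⟩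
  have h1 : (gball (PRG H n) (f ∘ S) r).ncard ≤
      ((fun T => f ∘ T) '' gball (PRG G n) S r).ncard :=
    Set.ncard_le_ncard hsub (hfin.image _)
  have h2 : ((fun T => f ∘ T) '' gball (PRG G n) S r).ncard ≤
      (gball (PRG G n) S r).ncard := Set.ncard_image_le hfin
  exact_mod_cast h1.trans h2
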